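/- arXiv:1203.2393 — 4 statements merged into one kernel-verified Lean document; each statement's English description precedes it below -/
import Mathlib

section
/- For the PU on–off sampling model under uniform sampling, fix λ_f > 0 and T_c > 0, regard the likelihood L(z; u) = u^{z_1}(1−u)^{1−z_1}·∏_{k=1}^{N−1} Pr_{z_k z_{k+1}}(T_c; u) as a function of u ∈ (0,1) (with Γ_c(u) = e^{−λ_f T_c/u}), and define the Fisher information I_m(u,N) = ∑_{z ∈ {0,1}^N} (∂/∂u of log L(z; u))² · L(z; u). Then for N ≥ 2, writing Γ = Γ_c(u), I_m(u,N) = (M_1 + M_2 + M_3 + M_4 + M_5) / ( u³(1−u)·(1−Γ)·(Γ + u − Γu)·(Γu − u + 1) ), where M_1 = Γ²·λ_f T_c·(N−1)·(1−u)·[λ_f T_c(1−u)(1+Γ) − 2u(1−2u)(1−Γ)], M_2 = Γ³·u²·[u(u−1)(3N−2) + (N−1)], M_3 = −Γ²·u²·[u(u−1)(7N−4) + (2N−1)], M_4 = Γ·u²·[N(5u²−5u+1) + 2u(1−u)], and M_5 = N·u³·(1−u). Equivalently, the Cramér–Rao bound I_m(u,N)^{−1} equals the reciprocal of this expression. -/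
open Finset

/-- Transition probabilities of the PU on-off process:
`transProb u lf t x y = Pr_{xy}(t)` where `false` = idle, `true` = active. -/
noncomputable def transProb (u lf t : ℝ) : Bool → Bool → ℝ
  | false, false => 1 - u + u * Real.exp (-(lf * t) / u)
  | false, true  => 1 - (1 - u + u * Real.exp (-(lf * t) / u))
  | true,  true  => u + (1 - u) * Real.exp (-(lf * t) / u)
  | true,  false => 1 - (u + (1 - u) * Real.exp (-(lf * t) / u))

/-- Likelihood of a binary sample sequence `z` of length `n + 1`
with inter-sample times `T 1, …, T n`:
`L(z) = u^{z_1}(1-u)^{1-z_1} ∏_{k=1}^{N-1} Pr_{z_k z_{k+1}}(T_k)`. -/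
noncomputable def seqProb (u lf : ℝ) {n : ℕ} (T : ℕ → ℝ) (z : Fin (n + 1) → Bool) : ℝ :=
  (if z 0 then u else 1 - u) *
    ∏ k : Fin n, transProb u lf (T (k.val + 1)) (z k.castSucc) (z k.succ)

namespace FisherAux

noncomputable def dtp (u lf t : ℝ) : Bool → Bool → ℝ
  | false, false => -1 + Real.exp (-(lf * t) / u) + u * (lf * t / u ^ 2 * Real.exp (-(lf * t) / u))
  | false, true  => -(-1 + Real.exp (-(lf * t) / u) + u * (lf * t / u ^ 2 * Real.exp (-(lf * t) / u)))
  | true,  true  => 1 - Real.exp (-(lf * t) / u) + (1 - u) * (lf * t / u ^ 2 * Real.exp (-(lf * t) / u))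
  | true,  false => -(1 - Real.exp (-(lf * t) / u) + (1 - u) * (lf * t / u ^ 2 * Real.exp (-(lf * t) / u)))

lemma hasDerivAt_gamma (u lf Tc : ℝ) (hu : u ≠ 0) :
    HasDerivAt (fun v : ℝ => Real.exp (-(lf * Tc) / v))
      (lf * Tc / u ^ 2 * Real.exp (-(lf * Tc) / u)) u := by
  have h1 : HasDerivAt (fun v : ℝ => -(lf * Tc) / v) (lf * Tc / u ^ 2) u := by
    simp only [div_eq_mul_inv]
    have h0 := (hasDerivAt_inv hu).const_mul (-(lf * Tc))
    exact h0.congr_deriv (by ring)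
  simpa [mul_comm] using h1.exp

lemma transProb_hasDerivAt (u lf Tc : ℝ) (hu : u ≠ 0) (x y : Bool) :
    HasDerivAt (fun v => transProb v lf Tc x y) (dtp u lf Tc x y) u := by
  have hg := hasDerivAt_gamma u lf Tc hu
  have hff : HasDerivAt (fun v : ℝ => 1 - v + v * Real.exp (-(lf * Tc) / v))
      (-1 + Real.exp (-(lf * Tc) / u) + u * (lf * Tc / u ^ 2 * Real.exp (-(lf * Tc) / u))) u := by
    have h := ((hasDerivAt_id u).const_sub 1).add ((hasDerivAt_id u).mul hg)
    exact h.congr_deriv (by simp only [id_eq]; ring)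
  have htt : HasDerivAt (fun v : ℝ => v + (1 - v) * Real.exp (-(lf * Tc) / v))
      (1 - Real.exp (-(lf * Tc) / u) + (1 - u) * (lf * Tc / u ^ 2 * Real.exp (-(lf * Tc) / u))) u := by
    have h := (hasDerivAt_id u).add (((hasDerivAt_id u).const_sub 1).mul hg)
    exact h.congr_deriv (by simp only [id_eq]; ring)
  cases x <;> cases y <;> simp only [transProb, dtp]
  · exact hff
  · exact hff.const_sub 1
  · exact htt.const_sub 1
  · exact htt

lemma transProb_pos {v lf Tc : ℝ} (hv : 0 < v) (hv1 : v < 1) (hlf : 0 < lf) (hTc : 0 < Tc)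
    (x y : Bool) : 0 < transProb v lf Tc x y := by
  have hg0 : 0 < Real.exp (-(lf * Tc) / v) := Real.exp_pos _
  have hg1 : Real.exp (-(lf * Tc) / v) < 1 := by
    apply Real.exp_lt_one_iff.mpr
    apply div_neg_of_neg_of_pos _ hv
    nlinarith
  cases x <;> cases y <;> simp only [transProb] <;> nlinarith

end FisherAux

namespace FisherAux

lemma seqProb_pos {v lf Tc : ℝ} (hv : 0 < v) (hv1 : v < 1) (hlf : 0 < lf) (hTc : 0 < Tc)
    {n : ℕ} (z : Fin (n + 1) → Bool) : 0 < seqProb v lf (fun _ => Tc) z := by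
  unfold seqProb
  apply mul_pos
  · split <;> linarith
  · exact Finset.prod_pos fun k _ => transProb_pos hv hv1 hlf hTc _ _

lemma seqProb_differentiableAt {u : ℝ} (lf Tc : ℝ) (hu : u ≠ 0) {n : ℕ}
    (z : Fin (n + 1) → Bool) :
    DifferentiableAt ℝ (fun v => seqProb v lf (fun _ => Tc) z) u := by
  unfold seqProb
  apply DifferentiableAt.mul
  · cases hz : z 0 <;> simp only [hz, if_true, if_false, Bool.false_eq_true]
    · exact (differentiable_const (1:ℝ)).sub differentiable_id |>.differentiableAt
    · exact differentiable_id.differentiableAt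
  · exact DifferentiableAt.fun_finsetProd fun k _ =>
      (transProb_hasDerivAt u lf Tc hu _ _).differentiableAt

lemma seqProb_snoc (v lf Tc : ℝ) {n : ℕ} (z : Fin (n + 1) → Bool) (b : Bool) :
    seqProb v lf (fun _ => Tc) (Fin.snoc z b) =
      seqProb v lf (fun _ => Tc) z * transProb v lf Tc (z (Fin.last n)) b := by
  unfold seqProb
  rw [Fin.prod_univ_castSucc]
  have h0 : (Fin.snoc z b : Fin (n + 2) → Bool) 0 = z 0 := by
    have : (0 : Fin (n + 2)) = Fin.castSucc 0 := rfl
    rw [this, Fin.snoc_castSucc]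
  simp only [h0, Fin.succ_castSucc, Fin.snoc_castSucc, Fin.succ_last, Fin.snoc_last]
  ring

def snocEquivBool (n : ℕ) : ((Fin (n + 1) → Bool) × Bool) ≃ (Fin (n + 2) → Bool) where
  toFun p := Fin.snoc p.1 p.2
  invFun z := (Fin.init z, z (Fin.last (n + 1)))
  left_inv p := by cases p; simp
  right_inv z := by simp [Fin.snoc_init_self]

lemma sum_snoc {M : Type*} [AddCommMonoid M] (n : ℕ) (F : (Fin (n + 2) → Bool) → M) :
    ∑ z, F z = ∑ z : Fin (n + 1) → Bool, ∑ b, F (Fin.snoc z b) := by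
  rw [← Equiv.sum_comp (snocEquivBool n) F, Fintype.sum_prod_type]
  rfl

end FisherAux

namespace FisherAux

lemma marginal {u lf Tc : ℝ} (hu : 0 < u) (hu1 : u < 1) (hlf : 0 < lf) (hTc : 0 < Tc) :
    ∀ (n : ℕ) (f : Bool → ℝ),
      ∑ z : Fin (n + 1) → Bool, seqProb u lf (fun _ => Tc) z * f (z (Fin.last n))
        = u * f true + (1 - u) * f false := by
  intro n
  induction n with
  | zero =>
    intro f
    rw [← Equiv.sum_comp (Equiv.funUnique (Fin 1) Bool).symm, Fintype.sum_bool]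
    simp [seqProb]
  | succ m ih =>
    intro f
    rw [sum_snoc]
    have step : ∀ z : Fin (m + 1) → Bool,
        ∑ b, seqProb u lf (fun _ => Tc) (Fin.snoc z b) * f ((Fin.snoc z b : Fin (m + 2) → Bool) (Fin.last (m + 1)))
          = seqProb u lf (fun _ => Tc) z *
              (fun x => transProb u lf Tc x true * f true + transProb u lf Tc x false * f false)
                (z (Fin.last m)) := by
      intro z
      rw [Fintype.sum_bool]
      simp only [seqProb_snoc, Fin.snoc_last]
      ring
    rw [Finset.sum_congr rfl fun z _ => step z,
      ih fun x => transProb u lf Tc x true * f true + transProb u lf Tc x false * f false]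
    simp only [transProb]
    ring

end FisherAux

namespace FisherAux

noncomputable def Jfun (u lf Tc : ℝ) (x : Bool) : ℝ :=
  dtp u lf Tc x true ^ 2 / transProb u lf Tc x true +
    dtp u lf Tc x false ^ 2 / transProb u lf Tc x false

lemma deriv_log_snoc {u lf Tc : ℝ} (hu : 0 < u) (hu1 : u < 1) (hlf : 0 < lf) (hTc : 0 < Tc)
    {n : ℕ} (z : Fin (n + 1) → Bool) (b : Bool) :
    deriv (fun v => Real.log (seqProb v lf (fun _ => Tc) (Fin.snoc z b))) u =
      deriv (fun v => Real.log (seqProb v lf (fun _ => Tc) z)) u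
        + dtp u lf Tc (z (Fin.last n)) b / transProb u lf Tc (z (Fin.last n)) b := by
  have hev : (fun v => Real.log (seqProb v lf (fun _ => Tc) (Fin.snoc z b))) =ᶠ[nhds u]
      (fun v => Real.log (seqProb v lf (fun _ => Tc) z)
        + Real.log (transProb v lf Tc (z (Fin.last n)) b)) := by
    filter_upwards [Ioo_mem_nhds hu hu1] with v hv
    rw [seqProb_snoc, Real.log_mul (ne_of_gt (seqProb_pos hv.1 hv.2 hlf hTc z))
      (ne_of_gt (transProb_pos hv.1 hv.2 hlf hTc _ _))]
  rw [hev.deriv_eq]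
  have h1 : DifferentiableAt ℝ (fun v => Real.log (seqProb v lf (fun _ => Tc) z)) u :=
    (seqProb_differentiableAt lf Tc (ne_of_gt hu) z).log
      (ne_of_gt (seqProb_pos hu hu1 hlf hTc z))
  have h2 := (transProb_hasDerivAt u lf Tc (ne_of_gt hu) (z (Fin.last n)) b).log
      (ne_of_gt (transProb_pos hu hu1 hlf hTc _ _))
  rw [deriv_fun_add h1 h2.differentiableAt, h2.deriv]

lemma key_alg (s L P Q D E : ℝ) (hP : P ≠ 0) (hQ : Q ≠ 0) (h1 : P + Q = 1) (h2 : D + E = 0) :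
    (s + D / P) ^ 2 * (L * P) + (s + E / Q) ^ 2 * (L * Q)
      = s ^ 2 * L + L * (D ^ 2 / P + E ^ 2 / Q) := by
  have hE : E = -D := by linarith
  have hQ1 : Q = 1 - P := by linarith
  subst hE hQ1
  field_simp
  ring

lemma fisher_rec {u lf Tc : ℝ} (hu : 0 < u) (hu1 : u < 1) (hlf : 0 < lf) (hTc : 0 < Tc) :
    ∀ n : ℕ,
      ∑ z : Fin (n + 1) → Bool,
          (deriv (fun v => Real.log (seqProb v lf (fun _ => Tc) z)) u) ^ 2
            * seqProb u lf (fun _ => Tc) z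
        = 1 / (u * (1 - u)) + n * (u * Jfun u lf Tc true + (1 - u) * Jfun u lf Tc false) := by
  intro n
  induction n with
  | zero =>
    rw [← Equiv.sum_comp (Equiv.funUnique (Fin 1) Bool).symm, Fintype.sum_bool]
    have et : (fun v : ℝ => Real.log (seqProb v lf (fun _ => Tc) fun _ : Fin 1 => true))
        = fun v : ℝ => Real.log v := by
      funext v; simp [seqProb]
    have ef : (fun v : ℝ => Real.log (seqProb v lf (fun _ => Tc) fun _ : Fin 1 => false))
        = fun v : ℝ => Real.log (1 - v) := by
      funext v; simp [seqProb]
    have hdf : deriv (fun v : ℝ => Real.log (1 - v)) u = -1 / (1 - u) := by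
      have h := (((hasDerivAt_id u).const_sub 1)).log (by intro h; simp at h; linarith)
      simpa using h.deriv
    have hue : ∀ b : Bool, (uniqueElim b : ∀ _ : Fin 1, Bool) = fun _ : Fin 1 => b := by
      intro b; funext i; rfl
    simp only [Equiv.funUnique_symm_apply, hue, et, ef]
    rw [hdf, Real.deriv_log]
    simp only [seqProb, Nat.cast_zero, Finset.univ_eq_empty, Finset.prod_empty, if_true, if_false,
      Bool.false_eq_true, mul_one, zero_mul]
    have hu' : u ≠ 0 := ne_of_gt hu
    have h1u : (1 : ℝ) - u ≠ 0 := sub_ne_zero.mpr (by linarith)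
    field_simp
    ring
  | succ m ih =>
    rw [sum_snoc]
    have hkey : ∀ z : Fin (m + 1) → Bool,
        ∑ b, (deriv (fun v => Real.log (seqProb v lf (fun _ => Tc) (Fin.snoc z b))) u) ^ 2
            * seqProb u lf (fun _ => Tc) (Fin.snoc z b)
          = (deriv (fun v => Real.log (seqProb v lf (fun _ => Tc) z)) u) ^ 2
              * seqProb u lf (fun _ => Tc) z
            + seqProb u lf (fun _ => Tc) z * Jfun u lf Tc (z (Fin.last m)) := by
      intro z
      rw [Fintype.sum_bool, deriv_log_snoc hu hu1 hlf hTc z true,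
        deriv_log_snoc hu hu1 hlf hTc z false, seqProb_snoc, seqProb_snoc]
      have hsumP : transProb u lf Tc (z (Fin.last m)) true
          + transProb u lf Tc (z (Fin.last m)) false = 1 := by
        cases z (Fin.last m) <;> simp only [transProb] <;> ring
      have hsumD : dtp u lf Tc (z (Fin.last m)) true
          + dtp u lf Tc (z (Fin.last m)) false = 0 := by
        cases z (Fin.last m) <;> simp only [dtp] <;> ring
      simp only [Jfun]
      exact key_alg _ _ _ _ _ _ (ne_of_gt (transProb_pos hu hu1 hlf hTc _ _))
        (ne_of_gt (transProb_pos hu hu1 hlf hTc _ _)) hsumP hsumD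
    rw [Finset.sum_congr rfl fun z _ => hkey z, Finset.sum_add_distrib, ih,
      marginal hu hu1 hlf hTc m (Jfun u lf Tc)]
    push_cast
    ring

end FisherAux

open FisherAux in
/-- closed form of the Fisher information
`I_m(u,N) = ∑_z (∂/∂u log L(z;u))² L(z;u)` for estimating the duty cycle `u`
under uniform sampling with inter-sample time `T_c`, `λ_f` held fixed and
`N = n + 1 ≥ 2` samples. -/
theorem fisher_information_u (u lf Tc : ℝ)
    (hu : 0 < u) (hu1 : u < 1) (hlf : 0 < lf) (hTc : 0 < Tc)
    (n : ℕ) (hn : 1 ≤ n) :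
    let Γ : ℝ := Real.exp (-(lf * Tc) / u)
    let Nr : ℝ := (n : ℝ) + 1
    let M1 : ℝ := Γ ^ 2 * (lf * Tc) * (Nr - 1) * (1 - u) *
      (lf * Tc * (1 - u) * (1 + Γ) - 2 * u * (1 - 2 * u) * (1 - Γ))
    let M2 : ℝ := Γ ^ 3 * u ^ 2 * (u * (u - 1) * (3 * Nr - 2) + (Nr - 1))
    let M3 : ℝ := -(Γ ^ 2 * u ^ 2 * (u * (u - 1) * (7 * Nr - 4) + (2 * Nr - 1)))
    let M4 : ℝ := Γ * u ^ 2 * (Nr * (5 * u ^ 2 - 5 * u + 1) + 2 * u * (1 - u))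
    let M5 : ℝ := Nr * u ^ 3 * (1 - u)
    ∑ z : Fin (n + 1) → Bool,
        (deriv (fun v => Real.log (seqProb v lf (fun _ => Tc) z)) u) ^ 2
          * seqProb u lf (fun _ => Tc) z
      = (M1 + M2 + M3 + M4 + M5) /
          (u ^ 3 * (1 - u) * (1 - Γ) * (Γ + u - Γ * u) * (Γ * u - u + 1)) := by
  intro Γ Nr M1 M2 M3 M4 M5
  rw [fisher_rec hu hu1 hlf hTc n]
  simp only [Γ, Nr, M1, M2, M3, M4, M5, Jfun, dtp, transProb]
  have hu' : u ≠ 0 := ne_of_gt hu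
  have h1u : (1 : ℝ) - u ≠ 0 := sub_ne_zero.mpr (by linarith)
  have hg0 : 0 < Real.exp (-(lf * Tc) / u) := Real.exp_pos _
  have hg1 : Real.exp (-(lf * Tc) / u) < 1 := by
    apply Real.exp_lt_one_iff.mpr
    apply div_neg_of_neg_of_pos _ hu
    nlinarith
  have h2 : (1 : ℝ) - Real.exp (-(lf * Tc) / u) ≠ 0 := sub_ne_zero.mpr (by linarith)
  have h3 : u + (1 - u) * Real.exp (-(lf * Tc) / u) ≠ 0 := by nlinarith
  have h4 : 1 - u + u * Real.exp (-(lf * Tc) / u) ≠ 0 := by nlinarith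
  have h5 : 1 - (u + (1 - u) * Real.exp (-(lf * Tc) / u)) ≠ 0 := by nlinarith
  have h6 : 1 - (1 - u + u * Real.exp (-(lf * Tc) / u)) ≠ 0 := by nlinarith
  have h7 : Real.exp (-(lf * Tc) / u) + u - Real.exp (-(lf * Tc) / u) * u ≠ 0 := by nlinarith
  have h8 : Real.exp (-(lf * Tc) / u) * u - u + 1 ≠ 0 := by nlinarith
  generalize Real.exp (-(lf * Tc) / u) = g at hg0 hg1 h2 h3 h4 h5 h6 h7 h8 ⊢
  have h9 : (g + u - u * g) * (u * (g - 1) + 1) ≠ 0 :=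
    mul_ne_zero (by convert h7 using 1; ring) (by convert h8 using 1; ring)
  field_simp
  rw [eq_div_iff h9]
  ring
end

section
/- Fix u ∈ (0,1), λ_f > 0 and T > 0. For N ≥ 2 let T_c(N) = T/(N−1), let Γ(N) = e^{−λ_f T_c(N)/u}, and let I_m(u,N) be the Fisher information for estimating u from N uniformly spaced samples, given by I_m(u,N) = (M_1+M_2+M_3+M_4+M_5)/(u³(1−u)(1−Γ)(Γ+u−Γu)(Γu−u+1)) with M_1 = Γ²·λ_f T_c·(N−1)·(1−u)·[λ_f T_c(1−u)(1+Γ) − 2u(1−2u)(1−Γ)], M_2 = Γ³u²[u(u−1)(3N−2)+(N−1)], M_3 = −Γ²u²[u(u−1)(7N−4)+(2N−1)], M_4 = Γu²[N(5u²−5u+1)+2u(1−u)], M_5 = Nu³(1−u), evaluated at Γ = Γ(N) and T_c = T_c(N). Then lim_{N→∞} I_m(u,N)^{−1} = u(1−u)/(1 + λ_f T/u). -/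
open Filter Topology

lemma cr_num (u lf T y G : ℝ) (hu : u ≠ 0) (hy : y - 1 ≠ 0) (hlfT : lf * T ≠ 0) :
    G ^ 2 * (lf * (T / (y - 1))) * (y - 1) * (1 - u) *
        (lf * (T / (y - 1)) * (1 - u) * (1 + G) - 2 * u * (1 - 2 * u) * (1 - G)) +
      G ^ 3 * u ^ 2 * (u * (u - 1) * (3 * y - 2) + (y - 1)) +
      -(G ^ 2 * u ^ 2 * (u * (u - 1) * (7 * y - 4) + (2 * y - 1))) +
      G * u ^ 2 * (y * (5 * u ^ 2 - 5 * u + 1) + 2 * u * (1 - u)) +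
      y * u ^ 3 * (1 - u)
    = (lf * T / u / (y - 1)) *
      (G ^ 2 * (lf * T) * (1 - u) *
          (u * (1 - u) * (1 + G) - 2 * u * (1 - 2 * u) * ((1 - G) / (lf * T / u / (y - 1))))
        - ((1 - G) / (lf * T / u / (y - 1))) *
            (u ^ 2 * G * (2 * (u * (u - 1)) - (2 * (u * (u - 1)) + 1) * G))
        + (lf * T / u + lf * T / u / (y - 1)) * ((1 - G) / (lf * T / u / (y - 1))) ^ 2 *
            (u ^ 2 * ((3 * (u * (u - 1)) + 1) * G - u * (u - 1)))) := by
  have hlf0 : lf ≠ 0 := left_ne_zero_of_mul hlfT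
  have hT0 : T ≠ 0 := right_ne_zero_of_mul hlfT
  field_simp
  ring

lemma cr_den (u lf T y G : ℝ) (hu : u ≠ 0) (hy : y - 1 ≠ 0) (hlfT : lf * T ≠ 0) :
    u ^ 3 * (1 - u) * (1 - G) * (G + u - G * u) * (G * u - u + 1)
    = (lf * T / u / (y - 1)) *
      (u ^ 3 * (1 - u) * ((1 - G) / (lf * T / u / (y - 1))) * (G + u - G * u) *
        (G * u - u + 1)) := by
  have hlf0 : lf ≠ 0 := left_ne_zero_of_mul hlfT
  have hT0 : T ≠ 0 := right_ne_zero_of_mul hlfT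
  field_simp

set_option maxHeartbeats 1000000 in
/-- the Cramér–Rao bound `I_m(u,N)⁻¹` for estimating the duty
cycle `u` from `N` uniformly spaced samples over a fixed window `T`
(inter-sample time `T_c(N) = T/(N-1)`, `Γ(N) = e^{-λ_f T_c(N)/u}`) tends to
`u(1-u)/(1 + λ_f T/u)` as `N → ∞`. -/
theorem cramer_rao_u_limit (u lf T : ℝ)
    (hu : 0 < u) (hu1 : u < 1) (hlf : 0 < lf) (hT : 0 < T) :
    Filter.Tendsto
      (fun N : ℕ =>
        (let Tc : ℝ := T / ((N : ℝ) - 1)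
         let Γ : ℝ := Real.exp (-(lf * Tc) / u)
         let M1 : ℝ := Γ ^ 2 * (lf * Tc) * ((N : ℝ) - 1) * (1 - u) *
           (lf * Tc * (1 - u) * (1 + Γ) - 2 * u * (1 - 2 * u) * (1 - Γ))
         let M2 : ℝ := Γ ^ 3 * u ^ 2 * (u * (u - 1) * (3 * (N : ℝ) - 2) + ((N : ℝ) - 1))
         let M3 : ℝ := -(Γ ^ 2 * u ^ 2 * (u * (u - 1) * (7 * (N : ℝ) - 4) + (2 * (N : ℝ) - 1)))
         let M4 : ℝ := Γ * u ^ 2 * ((N : ℝ) * (5 * u ^ 2 - 5 * u + 1) + 2 * u * (1 - u))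
         let M5 : ℝ := (N : ℝ) * u ^ 3 * (1 - u)
         (M1 + M2 + M3 + M4 + M5) /
           (u ^ 3 * (1 - u) * (1 - Γ) * (Γ + u - Γ * u) * (Γ * u - u + 1)))⁻¹)
      Filter.atTop
      (nhds (u * (1 - u) / (1 + lf * T / u))) := by
  have hu0 : u ≠ 0 := hu.ne'
  have hlfT : lf * T ≠ 0 := by positivity
  -- abbreviations as plain functions
  set e : ℕ → ℝ := fun N => lf * T / u / ((N : ℝ) - 1) with he
  set g : ℕ → ℝ := fun N => Real.exp (-(e N)) with hg
  set h : ℕ → ℝ := fun N => (1 - g N) / e N with hh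
  -- basic limits
  have hylim : Tendsto (fun N : ℕ => (N : ℝ) - 1) atTop atTop :=
    tendsto_atTop_add_const_right _ (-1) tendsto_natCast_atTop_atTop
  have hel : Tendsto e atTop (𝓝 0) := by
    have h2 : Tendsto (fun N : ℕ => (lf * T / u) * ((N : ℝ) - 1)⁻¹) atTop
        (𝓝 ((lf * T / u) * 0)) := hylim.inv_tendsto_atTop.const_mul _
    simpa [he, div_eq_mul_inv] using h2
  have hepos : ∀ᶠ N : ℕ in atTop, 0 < e N := by
    filter_upwards [eventually_ge_atTop 2] with N hN
    have h2 : (2 : ℝ) ≤ (N : ℝ) := by exact_mod_cast hN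
    have : (0:ℝ) < (N : ℝ) - 1 := by linarith
    exact div_pos (by positivity) this
  have hgl : Tendsto g atTop (𝓝 1) := by
    have hn : Tendsto (fun N : ℕ => -(e N)) atTop (𝓝 0) := by
      simpa using hel.neg
    have := (Real.continuous_exp.tendsto' 0 1 Real.exp_zero).comp hn
    simpa [hg, Function.comp_def] using this
  have hhl : Tendsto h atTop (𝓝 1) := by
    have h1 : HasDerivAt (fun x : ℝ => -x) (-1) 0 := hasDerivAt_neg 0
    have h2 : HasDerivAt (fun x : ℝ => Real.exp (-x)) (Real.exp (-0) * -1) 0 :=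
      (Real.hasDerivAt_exp (-0)).comp 0 h1
    have h3 : HasDerivAt (fun x : ℝ => 1 - Real.exp (-x)) 1 0 := by
      simpa using h2.const_sub (1:ℝ)
    have h4 := hasDerivAt_iff_tendsto_slope.mp h3
    have h5 : Tendsto e atTop (𝓝[≠] 0) := by
      rw [tendsto_nhdsWithin_iff]
      exact ⟨hel, hepos.mono fun N hN => Set.mem_compl_singleton_iff.mpr hN.ne'⟩
    have h6 := h4.comp h5
    refine h6.congr fun N => ?_
    simp [Function.comp, slope_def_field, hh, hg]
  have hpair : Tendsto (fun N : ℕ => ((g N, h N), e N)) atTop (𝓝 ((1, 1), 0)) := by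
    have := (hgl.prodMk hhl).prodMk hel
    rw [← nhds_prod_eq, ← nhds_prod_eq] at this
    exact this
  -- limit of the factored denominator-part
  have hDcont : Continuous (fun p : (ℝ × ℝ) × ℝ =>
      u ^ 3 * (1 - u) * p.1.2 * (p.1.1 + u - p.1.1 * u) * (p.1.1 * u - u + 1)) := by
    fun_prop
  have hDfl : Tendsto (fun N : ℕ =>
      u ^ 3 * (1 - u) * h N * (g N + u - g N * u) * (g N * u - u + 1)) atTop
      (𝓝 (u ^ 3 * (1 - u))) := by
    have := (hDcont.tendsto ((1, 1), 0)).comp hpair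
    simp only [Function.comp_def] at this
    convert this using 2
    ring
  have hNcont : Continuous (fun p : (ℝ × ℝ) × ℝ =>
      p.1.1 ^ 2 * (lf * T) * (1 - u) *
          (u * (1 - u) * (1 + p.1.1) - 2 * u * (1 - 2 * u) * p.1.2)
        - p.1.2 * (u ^ 2 * p.1.1 * (2 * (u * (u - 1)) - (2 * (u * (u - 1)) + 1) * p.1.1))
        + (lf * T / u + p.2) * p.1.2 ^ 2 *
            (u ^ 2 * ((3 * (u * (u - 1)) + 1) * p.1.1 - u * (u - 1)))) := by
    fun_prop
  have hNfl : Tendsto (fun N : ℕ =>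
      g N ^ 2 * (lf * T) * (1 - u) *
          (u * (1 - u) * (1 + g N) - 2 * u * (1 - 2 * u) * h N)
        - h N * (u ^ 2 * g N * (2 * (u * (u - 1)) - (2 * (u * (u - 1)) + 1) * g N))
        + (lf * T / u + e N) * h N ^ 2 *
            (u ^ 2 * ((3 * (u * (u - 1)) + 1) * g N - u * (u - 1)))) atTop
      (𝓝 (u ^ 2 + u * (lf * T))) := by
    have := (hNcont.tendsto ((1, 1), 0)).comp hpair
    simp only [Function.comp_def] at this
    convert this using 2
    field_simp
    ring
  have hNe : (u ^ 2 + u * (lf * T)) ≠ 0 := by positivity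
  have hdiv := hDfl.div hNfl hNe
  have hval : u ^ 3 * (1 - u) / (u ^ 2 + u * (lf * T)) = u * (1 - u) / (1 + lf * T / u) := by
    rw [div_eq_div_iff (by positivity) (by positivity)]
    field_simp
  rw [hval] at hdiv
  refine hdiv.congr' ?_
  filter_upwards [eventually_ge_atTop 2] with N hN
  have h2 : (2 : ℝ) ≤ (N : ℝ) := by exact_mod_cast hN
  have hy : (N : ℝ) - 1 ≠ 0 := by linarith
  have he0 : e N ≠ 0 := by
    have : (0:ℝ) < (N : ℝ) - 1 := by linarith
    exact (div_pos (by positivity) this).ne'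
  show _ = _
  simp only []
  have harg : -(lf * (T / ((N : ℝ) - 1))) / u = -(e N) := by
    rw [he]; field_simp
  rw [harg, inv_div, cr_den u lf T (N : ℝ) (g N) hu0 hy hlfT,
    cr_num u lf T (N : ℝ) (g N) hu0 hy hlfT, mul_div_mul_left _ _ he0]
  simp only [Pi.div_apply, hh, he]
end

section
/- For the PU on–off sampling model under uniform sampling, fix u ∈ (0,1) and T_c > 0, regard the likelihood L(z; λ_f) = u^{z_1}(1−u)^{1−z_1}·∏_{k=1}^{N−1} Pr_{z_k z_{k+1}}(T_c; λ_f) as a function of λ_f > 0 (with u fixed and Γ_c(λ_f) = e^{−λ_f T_c/u}), and define the Fisher information I_m(λ_f,N) = ∑_{z ∈ {0,1}^N} (∂/∂λ_f of log L(z; λ_f))² · L(z; λ_f). Then for N ≥ 2, writing Γ = Γ_c(λ_f), I_m(λ_f,N) = ( (Γ·T_c)²·(1−u)·(1+Γ)·(N−1) ) / ( u·(1−Γ)·[Γ + u·(1−Γ)²·(1−u)] ); equivalently the Cramér–Rao bound is I_m(λ_f,N)^{−1} = u(1−Γ)[Γ + u(1−Γ)²(1−u)] / ( (Γ T_c)²(1−u)(1+Γ)(N−1)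 ). -/
open Finset

noncomputable def dtrans (u lf Tc : ℝ) : Bool → Bool → ℝ
  | false, false => -(Tc * Real.exp (-(lf * Tc) / u))
  | false, true  => Tc * Real.exp (-(lf * Tc) / u)
  | true,  true  => -((1 - u) * Tc / u * Real.exp (-(lf * Tc) / u))
  | true,  false => (1 - u) * Tc / u * Real.exp (-(lf * Tc) / u)

noncomputable def Ssum (u lf Tc : ℝ) {n : ℕ} (z : Fin (n + 1) → Bool) : ℝ :=
  ∑ k : Fin n, dtrans u lf Tc (z k.castSucc) (z k.succ) /
    transProb u lf Tc (z k.castSucc) (z k.succ)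

section Lemmas

variable {u lf Tc : ℝ} (hu : 0 < u) (hu1 : u < 1) (hlf : 0 < lf) (hTc : 0 < Tc)

lemma gamma_pos : 0 < Real.exp (-(lf * Tc) / u) := Real.exp_pos _

lemma gamma_lt_one (hu : 0 < u) (hlf : 0 < lf) (hTc : 0 < Tc) :
    Real.exp (-(lf * Tc) / u) < 1 := by
  rw [Real.exp_lt_one_iff]
  exact div_neg_of_neg_of_pos (neg_neg_of_pos (mul_pos hlf hTc)) hu

include hu hu1 hlf hTc in
lemma transProb_pos (x y : Bool) : 0 < transProb u lf Tc x y := by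
  have h1 : 0 < Real.exp (-(lf * Tc) / u) := Real.exp_pos _
  have h2 : Real.exp (-(lf * Tc) / u) < 1 := gamma_lt_one hu hlf hTc
  cases x <;> cases y <;> simp only [transProb] <;> nlinarith

include hu in
lemma hasDerivAt_transProb (x y : Bool) :
    HasDerivAt (fun l => transProb u l Tc x y) (dtrans u lf Tc x y) lf := by
  have h1 : HasDerivAt (fun l : ℝ => -(l * Tc) / u) (-Tc / u) lf := by
    simpa using (((hasDerivAt_id lf).mul_const Tc).neg.div_const u)
  have h2 : HasDerivAt (fun l : ℝ => Real.exp (-(l * Tc) / u))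
      (Real.exp (-(lf * Tc) / u) * (-Tc / u)) lf := h1.exp
  cases x <;> cases y <;> simp only [transProb, dtrans]
  · exact (((h2.const_mul u).const_add (1 - u))).congr_deriv (by field_simp [hu.ne'] <;> ring)
  · exact (((h2.const_mul u).const_add (1 - u)).const_sub 1).congr_deriv (by field_simp [hu.ne'] <;> ring)
  · exact (((h2.const_mul (1 - u)).const_add u).const_sub 1).congr_deriv (by field_simp [hu.ne'] <;> ring)
  · exact (((h2.const_mul (1 - u)).const_add u)).congr_deriv (by field_simp [hu.ne'] <;> ring)

end Lemmas

section Main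

variable {u lf Tc : ℝ} (hu : 0 < u) (hu1 : u < 1) (hlf : 0 < lf) (hTc : 0 < Tc)

include hu hu1 hlf hTc in
lemma hasDerivAt_prod : ∀ {n : ℕ} (z : Fin (n + 1) → Bool),
    HasDerivAt
      (fun l => ∏ k : Fin n, transProb u l Tc (z k.castSucc) (z k.succ))
      ((∏ k : Fin n, transProb u lf Tc (z k.castSucc) (z k.succ)) * Ssum u lf Tc z) lf := by
  intro n
  induction n with
  | zero =>
    intro z
    simp only [Ssum, Finset.univ_eq_empty, Finset.prod_empty, Finset.sum_empty, mul_zero]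
    exact hasDerivAt_const lf 1
  | succ n ih =>
    intro z
    have hz : ∀ (j : Fin n), z j.castSucc.succ = (z ∘ Fin.castSucc) j.succ := by
      intro j; rw [Fin.succ_castSucc]; rfl
    have h1 := (ih (z ∘ Fin.castSucc)).mul (hasDerivAt_transProb (Tc := Tc) hu
      (z (Fin.last n).castSucc) (z (Fin.last n).succ))
    have hP := transProb_pos hu hu1 hlf hTc (z (Fin.last n).castSucc) (z (Fin.last n).succ)
    have key : (fun l => ∏ k : Fin (n+1), transProb u l Tc (z k.castSucc) (z k.succ)) =
        (fun l => (∏ k : Fin n, transProb u l Tc ((z ∘ Fin.castSucc) k.castSucc)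
            ((z ∘ Fin.castSucc) k.succ)) *
          transProb u l Tc (z (Fin.last n).castSucc) (z (Fin.last n).succ)) := by
      funext l
      rw [Fin.prod_univ_castSucc]
      rfl
    rw [key, Fin.prod_univ_castSucc]
    have key2 : Ssum u lf Tc z = Ssum u lf Tc (z ∘ Fin.castSucc) +
        dtrans u lf Tc (z (Fin.last n).castSucc) (z (Fin.last n).succ) /
          transProb u lf Tc (z (Fin.last n).castSucc) (z (Fin.last n).succ) := by
      unfold Ssum
      rw [Fin.sum_univ_castSucc]
      rfl
    rw [key2]
    have key3 : (∏ k : Fin n, transProb u lf Tc (z k.castSucc.castSucc) (z k.castSucc.succ)) =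
        (∏ k : Fin n, transProb u lf Tc ((z ∘ Fin.castSucc) k.castSucc)
          ((z ∘ Fin.castSucc) k.succ)) :=
      rfl
    rw [key3]
    refine h1.congr_deriv ?_
    have hB := hP.ne'
    set A := ∏ k : Fin n, transProb u lf Tc ((z ∘ Fin.castSucc) k.castSucc) ((z ∘ Fin.castSucc) k.succ)
    set B := transProb u lf Tc (z (Fin.last n).castSucc) (z (Fin.last n).succ)
    set S := Ssum u lf Tc (z ∘ Fin.castSucc)
    set d := dtrans u lf Tc (z (Fin.last n).castSucc) (z (Fin.last n).succ)
    field_simp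

include hu hu1 hlf hTc in
lemma seqProb_pos {n : ℕ} (z : Fin (n + 1) → Bool) :
    0 < seqProb u lf (fun _ => Tc) z := by
  unfold seqProb
  apply mul_pos
  · rcases h : z 0 with _ | _ <;> simp [h] <;> linarith
  · exact Finset.prod_pos (fun k _ => transProb_pos hu hu1 hlf hTc _ _)

include hu hu1 hlf hTc in
lemma hasDerivAt_seqProb {n : ℕ} (z : Fin (n + 1) → Bool) :
    HasDerivAt (fun l => seqProb u l (fun _ => Tc) z)
      (seqProb u lf (fun _ => Tc) z * Ssum u lf Tc z) lf := by
  unfold seqProb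
  have h := (hasDerivAt_prod hu hu1 hlf hTc z).const_mul (if z 0 then u else 1 - u)
  exact h.congr_deriv (mul_assoc _ _ _).symm

include hu hu1 hlf hTc in
lemma deriv_log_seqProb {n : ℕ} (z : Fin (n + 1) → Bool) :
    deriv (fun l => Real.log (seqProb u l (fun _ => Tc) z)) lf = Ssum u lf Tc z := by
  have h := ((hasDerivAt_seqProb hu hu1 hlf hTc z).log
    (seqProb_pos hu hu1 hlf hTc z).ne').deriv
  rw [h, mul_comm, mul_div_assoc, div_self (seqProb_pos hu hu1 hlf hTc z).ne', mul_one]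

end Main

def snocEquiv (n : ℕ) : ((Fin (n + 1) → Bool) × Bool) ≃ (Fin (n + 2) → Bool) where
  toFun p := Fin.snoc p.1 p.2
  invFun z := (Fin.init z, z (Fin.last (n + 1)))
  left_inv p := by
    ext <;> simp [Fin.init_snoc, Fin.snoc_last]
  right_inv z := by
    simp [Fin.snoc_init_self]

lemma sum_split {n : ℕ} (g : (Fin (n + 2) → Bool) → ℝ) :
    ∑ z : Fin (n + 2) → Bool, g z =
      ∑ z' : Fin (n + 1) → Bool, ∑ b : Bool, g (Fin.snoc z' b) := by
  rw [← Equiv.sum_comp (snocEquiv n) g, Fintype.sum_prod_type]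
  rfl

section Main2

variable {u lf Tc : ℝ} (hu : 0 < u) (hu1 : u < 1) (hlf : 0 < lf) (hTc : 0 < Tc)

lemma seqProb_snoc {n : ℕ} (z' : Fin (n + 1) → Bool) (b : Bool) (l : ℝ) :
    seqProb u l (fun _ => Tc) (Fin.snoc z' b) =
      seqProb u l (fun _ => Tc) z' * transProb u l Tc (z' (Fin.last n)) b := by
  unfold seqProb
  rw [Fin.prod_univ_castSucc]
  have h0 : (Fin.snoc z' b : Fin (n + 2) → Bool) 0 = z' 0 := by
    rw [← Fin.castSucc_zero, Fin.snoc_castSucc]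
  simp only [h0, Fin.succ_castSucc, Fin.snoc_castSucc, Fin.succ_last, Fin.snoc_last]
  ring

lemma Ssum_snoc {n : ℕ} (z' : Fin (n + 1) → Bool) (b : Bool) :
    Ssum u lf Tc (Fin.snoc z' b) =
      Ssum u lf Tc z' +
        dtrans u lf Tc (z' (Fin.last n)) b / transProb u lf Tc (z' (Fin.last n)) b := by
  unfold Ssum
  rw [Fin.sum_univ_castSucc]
  simp only [Fin.succ_castSucc, Fin.snoc_castSucc, Fin.succ_last, Fin.snoc_last]

omit hu hu1 hlf hTc in
lemma marginal : ∀ (n : ℕ) (f : Bool → ℝ),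
    ∑ z : Fin (n + 1) → Bool, seqProb u lf (fun _ => Tc) z * f (z (Fin.last n)) =
      (1 - u) * f false + u * f true := by
  intro n
  induction n with
  | zero =>
    intro f
    rw [← Equiv.sum_comp ((Equiv.funUnique (Fin 1) Bool).symm)]
    simp [seqProb, Fintype.sum_bool]
    ring
  | succ n ih =>
    intro f
    rw [sum_split]
    have step : ∀ z' : Fin (n + 1) → Bool,
        ∑ b : Bool, seqProb u lf (fun _ => Tc) (Fin.snoc z' b) *
            f ((Fin.snoc z' b : Fin (n + 2) → Bool) (Fin.last (n + 1))) =
          seqProb u lf (fun _ => Tc) z' *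
            (fun x => transProb u lf Tc x false * f false +
              transProb u lf Tc x true * f true) (z' (Fin.last n)) := by
      intro z'
      rw [Fintype.sum_bool]
      simp only [Fin.snoc_last, seqProb_snoc]
      ring
    rw [Finset.sum_congr rfl (fun z' _ => step z')]
    rw [ih (fun x => transProb u lf Tc x false * f false + transProb u lf Tc x true * f true)]
    simp only [transProb]
    ring

end Main2

noncomputable def Jfun (u lf Tc : ℝ) (x : Bool) : ℝ :=
  (dtrans u lf Tc x false) ^ 2 / transProb u lf Tc x false +
    (dtrans u lf Tc x true) ^ 2 / transProb u lf Tc x true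

section Main3

variable {u lf Tc : ℝ} (hu : 0 < u) (hu1 : u < 1) (hlf : 0 < lf) (hTc : 0 < Tc)

include hu hu1 hlf hTc in
lemma fisher_sum : ∀ n : ℕ,
    ∑ z : Fin (n + 1) → Bool, (Ssum u lf Tc z) ^ 2 * seqProb u lf (fun _ => Tc) z =
      (n : ℝ) * ((1 - u) * Jfun u lf Tc false + u * Jfun u lf Tc true) := by
  intro n
  induction n with
  | zero => simp [Ssum]
  | succ n ih =>
    rw [sum_split]
    have hg1 : (0 : ℝ) < Real.exp (-(lf * Tc) / u) := Real.exp_pos _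
    have hg2 : Real.exp (-(lf * Tc) / u) < 1 := gamma_lt_one hu hlf hTc
    have step : ∀ z' : Fin (n + 1) → Bool,
        ∑ b : Bool, (Ssum u lf Tc (Fin.snoc z' b)) ^ 2 *
            seqProb u lf (fun _ => Tc) (Fin.snoc z' b) =
          (Ssum u lf Tc z') ^ 2 * seqProb u lf (fun _ => Tc) z' +
            seqProb u lf (fun _ => Tc) z' * Jfun u lf Tc (z' (Fin.last n)) := by
      intro z'
      rw [Fintype.sum_bool]
      simp only [Ssum_snoc, seqProb_snoc]
      have ne1 : (1 - u + u * Real.exp (-(lf * Tc) / u)) ≠ 0 :=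
        (by nlinarith : (0:ℝ) < 1 - u + u * Real.exp (-(lf * Tc) / u)).ne'
      have ne2 : (1 - (1 - u + u * Real.exp (-(lf * Tc) / u))) ≠ 0 :=
        (by nlinarith : (0:ℝ) < 1 - (1 - u + u * Real.exp (-(lf * Tc) / u))).ne'
      have ne3 : (u + (1 - u) * Real.exp (-(lf * Tc) / u)) ≠ 0 :=
        (by nlinarith : (0:ℝ) < u + (1 - u) * Real.exp (-(lf * Tc) / u)).ne'
      have ne4 : (1 - (u + (1 - u) * Real.exp (-(lf * Tc) / u))) ≠ 0 :=
        (by nlinarith : (0:ℝ) < 1 - (u + (1 - u) * Real.exp (-(lf * Tc) / u))).ne'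
      cases z' (Fin.last n) <;>
        · simp only [Jfun, transProb, dtrans]
          generalize Real.exp (-(lf * Tc) / u) = g at *
          generalize 1 - u + u * g = q at *
          generalize u + (1 - u) * g = r at *
          field_simp
          ring
    rw [Finset.sum_congr rfl (fun z' _ => step z'), Finset.sum_add_distrib, ih,
      marginal (n := n) (Jfun u lf Tc)]
    push_cast
    ring

end Main3

/-- closed form of the Fisher information
`I_m(λ_f,N) = ∑_z (∂/∂λ_f log L(z;λ_f))² L(z;λ_f)` for estimating the departure
rate `λ_f` under uniform sampling with inter-sample time `T_c`, `u` held fixed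
and `N = n + 1 ≥ 2` samples:
`I_m(λ_f,N) = (Γ T_c)²(1-u)(1+Γ)(N-1) / (u(1-Γ)[Γ + u(1-Γ)²(1-u)])`. -/
theorem fisher_information_lambda_f (u lf Tc : ℝ)
    (hu : 0 < u) (hu1 : u < 1) (hlf : 0 < lf) (hTc : 0 < Tc)
    (n : ℕ) (hn : 1 ≤ n) :
    let Γ : ℝ := Real.exp (-(lf * Tc) / u)
    ∑ z : Fin (n + 1) → Bool,
        (deriv (fun l => Real.log (seqProb u l (fun _ => Tc) z)) lf) ^ 2
          * seqProb u lf (fun _ => Tc) z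
      = (Γ * Tc) ^ 2 * (1 - u) * (1 + Γ) * (n : ℝ) /
          (u * (1 - Γ) * (Γ + u * (1 - Γ) ^ 2 * (1 - u))) := by
  intro Γ
  have hstep : ∀ z : Fin (n + 1) → Bool,
      (deriv (fun l => Real.log (seqProb u l (fun _ => Tc) z)) lf) ^ 2
          * seqProb u lf (fun _ => Tc) z
        = (Ssum u lf Tc z) ^ 2 * seqProb u lf (fun _ => Tc) z := fun z => by
    rw [deriv_log_seqProb hu hu1 hlf hTc z]
  rw [Finset.sum_congr rfl (fun z _ => hstep z), fisher_sum hu hu1 hlf hTc n]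
  have hΓ : Γ = Real.exp (-(lf * Tc) / u) := rfl
  rw [hΓ]
  have hg1 : (0 : ℝ) < Real.exp (-(lf * Tc) / u) := Real.exp_pos _
  have hg2 : Real.exp (-(lf * Tc) / u) < 1 := gamma_lt_one hu hlf hTc
  have ne1 : (1 - u + u * Real.exp (-(lf * Tc) / u)) ≠ 0 :=
    (by nlinarith : (0:ℝ) < 1 - u + u * Real.exp (-(lf * Tc) / u)).ne'
  have ne2 : (1 - (1 - u + u * Real.exp (-(lf * Tc) / u))) ≠ 0 :=
    (by nlinarith : (0:ℝ) < 1 - (1 - u + u * Real.exp (-(lf * Tc) / u))).ne'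
  have ne3 : (u + (1 - u) * Real.exp (-(lf * Tc) / u)) ≠ 0 :=
    (by nlinarith : (0:ℝ) < u + (1 - u) * Real.exp (-(lf * Tc) / u)).ne'
  have ne4 : (1 - (u + (1 - u) * Real.exp (-(lf * Tc) / u))) ≠ 0 :=
    (by nlinarith : (0:ℝ) < 1 - (u + (1 - u) * Real.exp (-(lf * Tc) / u))).ne'
  have ne5 : (1 - Real.exp (-(lf * Tc) / u)) ≠ 0 :=
    (by nlinarith : (0:ℝ) < 1 - Real.exp (-(lf * Tc) / u)).ne'
  have hp6 : (0:ℝ) < u * (1 - Real.exp (-(lf * Tc) / u)) ^ 2 * (1 - u) :=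
    mul_pos (mul_pos hu (pow_pos (by nlinarith) 2)) (by nlinarith)
  have ne6 : (Real.exp (-(lf * Tc) / u) +
      u * (1 - Real.exp (-(lf * Tc) / u)) ^ 2 * (1 - u)) ≠ 0 :=
    (by nlinarith : (0:ℝ) < Real.exp (-(lf * Tc) / u) +
      u * (1 - Real.exp (-(lf * Tc) / u)) ^ 2 * (1 - u)).ne'
  have hune := hu.ne'
  simp only [Jfun, transProb, dtrans]
  generalize Real.exp (-(lf * Tc) / u) = g at *
  generalize hq : 1 - u + u * g = q at *
  generalize hr : u + (1 - u) * g = r at *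
  generalize hs : g + u * (1 - g) ^ 2 * (1 - u) = w at *
  field_simp
  subst hq hr hs
  ring
end

section
/- Fix u ∈ (0,1), λ_f > 0 and T > 0. For N ≥ 2 let T_c(N) = T/(N−1), Γ(N) = e^{−λ_f T_c(N)/u}, and let I_m(λ_f,N)^{−1} = u·(1−Γ(N))·[Γ(N) + u(1−Γ(N))²(1−u)] / ( (Γ(N)·T_c(N))²·(1−u)·(1+Γ(N))·(N−1) ) be the Cramér–Rao bound for estimating λ_f from N uniformly spaced samples over the window T. Then lim_{N→∞} I_m(λ_f,N)^{−1} = λ_f / ( 2T·(1−u) ). -/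
open Filter

private lemma aux_slope (u lf : ℝ) (hu : 0 < u) :
    Filter.Tendsto (fun x : ℝ => (1 - Real.exp (-(lf * x) / u)) / x)
      (nhdsWithin 0 {x : ℝ | x ≠ 0}) (nhds (lf / u)) := by
  have hderiv : HasDerivAt (fun x : ℝ => 1 - Real.exp (-(lf * x) / u)) (lf / u) 0 := by
    have h1 : HasDerivAt (fun x : ℝ => -(lf * x) / u) (-lf / u) 0 := by
      simpa using ((hasDerivAt_id (0:ℝ)).const_mul lf).neg.div_const u
    have h2 := (Real.hasDerivAt_exp ((-(lf * 0) / u))).comp 0 h1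
    have h3 : HasDerivAt (fun x : ℝ => Real.exp (-(lf * x) / u)) (-lf / u) 0 := by
      simpa [Function.comp_def] using h2
    simpa [neg_div, neg_neg, Pi.sub_def] using (hasDerivAt_const (0:ℝ) (1:ℝ)).sub h3
  have := hasDerivAt_iff_tendsto_slope.mp hderiv
  have heq : (slope (fun x : ℝ => 1 - Real.exp (-(lf * x) / u)) 0)
      =ᶠ[nhdsWithin 0 {x : ℝ | x ≠ 0}] fun x => (1 - Real.exp (-(lf * x) / u)) / x := by
    filter_upwards [self_mem_nhdsWithin] with x hx
    simp [slope_def_field, div_eq_mul_inv, mul_comm]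
  exact this.congr' heq

/-- the Cramér–Rao bound
`I_m(λ_f,N)⁻¹ = u(1-Γ)[Γ + u(1-Γ)²(1-u)] / ((Γ T_c)²(1-u)(1+Γ)(N-1))`
for estimating the departure rate `λ_f` from `N` uniformly spaced samples over
a fixed window `T` (inter-sample time `T_c(N) = T/(N-1)`,
`Γ(N) = e^{-λ_f T_c(N)/u}`) tends to `λ_f/(2T(1-u))` as `N → ∞`. -/
theorem cramer_rao_lambda_f_limit (u lf T : ℝ)
    (hu : 0 < u) (hu1 : u < 1) (hlf : 0 < lf) (hT : 0 < T) :
    Filter.Tendsto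
      (fun N : ℕ =>
        let Tc : ℝ := T / ((N : ℝ) - 1)
        let Γ : ℝ := Real.exp (-(lf * Tc) / u)
        u * (1 - Γ) * (Γ + u * (1 - Γ) ^ 2 * (1 - u)) /
          ((Γ * Tc) ^ 2 * (1 - u) * (1 + Γ) * ((N : ℝ) - 1)))
      Filter.atTop
      (nhds (lf / (2 * T * (1 - u)))) := by
  have hu1' : (1 : ℝ) - u ≠ 0 := by linarith
  have hT' : T ≠ 0 := hT.ne'
  -- the function of x = Tc
  set g : ℝ → ℝ := fun x =>
    ((1 - Real.exp (-(lf * x) / u)) / x) *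
      (u * (Real.exp (-(lf * x) / u) +
        u * (1 - Real.exp (-(lf * x) / u)) ^ 2 * (1 - u)) /
        ((Real.exp (-(lf * x) / u)) ^ 2 * (1 - u) * (1 + Real.exp (-(lf * x) / u)) * T))
    with hg
  -- limit of g at 0 within nonzero reals
  have hg2 : Filter.Tendsto (fun x : ℝ =>
      u * (Real.exp (-(lf * x) / u) +
        u * (1 - Real.exp (-(lf * x) / u)) ^ 2 * (1 - u)) /
        ((Real.exp (-(lf * x) / u)) ^ 2 * (1 - u) * (1 + Real.exp (-(lf * x) / u)) * T))
      (nhdsWithin 0 {x : ℝ | x ≠ 0}) (nhds (u / (2 * T * (1 - u)))) := by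
    have hc : ContinuousAt (fun x : ℝ =>
        u * (Real.exp (-(lf * x) / u) +
          u * (1 - Real.exp (-(lf * x) / u)) ^ 2 * (1 - u)) /
          ((Real.exp (-(lf * x) / u)) ^ 2 * (1 - u) * (1 + Real.exp (-(lf * x) / u)) * T)) 0 := by
      apply ContinuousAt.div
      · fun_prop
      · fun_prop
      · simp only [mul_zero, neg_zero, zero_div, Real.exp_zero]
        intro h
        nlinarith
    have := hc.continuousWithinAt (s := {x : ℝ | x ≠ 0})
    rw [ContinuousWithinAt] at this
    convert this using 2
    simp only [mul_zero, neg_zero, zero_div, Real.exp_zero]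
    ring
  have hgt : Filter.Tendsto g (nhdsWithin 0 {x : ℝ | x ≠ 0})
      (nhds (lf / (2 * T * (1 - u)))) := by
    have := (aux_slope u lf hu).mul hg2
    have hval : lf / u * (u / (2 * T * (1 - u))) = lf / (2 * T * (1 - u)) := by
      field_simp
    rwa [hval] at this
  -- Tc tends to 0 within nonzero reals
  have hTc : Filter.Tendsto (fun N : ℕ => T / ((N : ℝ) - 1)) Filter.atTop
      (nhdsWithin 0 {x : ℝ | x ≠ 0}) := by
    apply tendsto_nhdsWithin_of_tendsto_nhds_of_eventually_within
    · exact Filter.Tendsto.div_atTop tendsto_const_nhds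
        (Filter.tendsto_atTop_add_const_right _ (-1) tendsto_natCast_atTop_atTop)
    · filter_upwards [Filter.eventually_ge_atTop 2] with N hN
      have h1 : (1 : ℝ) ≤ (N : ℝ) - 1 := by
        have : (2 : ℝ) ≤ (N : ℝ) := by exact_mod_cast hN
        linarith
      have : 0 < T / ((N : ℝ) - 1) := div_pos hT (by linarith)
      exact this.ne'
  have hcomp := hgt.comp hTc
  -- identify with the original function eventually
  apply hcomp.congr'
  filter_upwards [Filter.eventually_ge_atTop 2] with N hN
  have hs : (1 : ℝ) ≤ (N : ℝ) - 1 := by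
    have : (2 : ℝ) ≤ (N : ℝ) := by exact_mod_cast hN
    linarith
  have hs0 : (N : ℝ) - 1 ≠ 0 := by linarith
  set Tc : ℝ := T / ((N : ℝ) - 1) with hTcdef
  have hTc0 : Tc ≠ 0 := (div_pos hT (by linarith)).ne'
  have hTcs : Tc * ((N : ℝ) - 1) = T := by
    rw [hTcdef]; field_simp
  set Γ : ℝ := Real.exp (-(lf * Tc) / u) with hΓ
  have hΓ0 : Γ ≠ 0 := (Real.exp_pos _).ne'
  simp only [Function.comp, hg]
  show ((1 - Γ) / Tc) * (u * (Γ + u * (1 - Γ) ^ 2 * (1 - u)) /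
      (Γ ^ 2 * (1 - u) * (1 + Γ) * T))
      = u * (1 - Γ) * (Γ + u * (1 - Γ) ^ 2 * (1 - u)) /
        ((Γ * Tc) ^ 2 * (1 - u) * (1 + Γ) * ((N : ℝ) - 1))
  rw [div_mul_div_comm, ← hTcs]
  ring_nf
end
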